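/- Let W ≥ 1 and λ ≥ 1, and define c : ℝ≥0 → ℝ by c(x) = λ for 0 ≤ x < 1 and c(x) = 1/x for x ≥ 1. Then for all x ∈ [1, W]: λ · c(x) ≤ (1/x) ∫_0^x c(t) dt ≤ (ln W + λ) · c(x). -/

import Mathlib

theorem fair_cost_good_beta (W lam : ℝ) (hW : 1 ≤ W) (hlam : 1 ≤ lam)
    (c : ℝ → ℝ)
    (hc1 : ∀ x : ℝ, 0 ≤ x → x < 1 → c x = lam)
    (hc2 : ∀ x : ℝ, 1 ≤ x → c x = 1 / x) :
    ∀ x : ℝ, 1 ≤ x → x ≤ W →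
      lam * c x ≤ (1 / x) * (∫ t in (0:ℝ)..x, c t) ∧
        (1 / x) * (∫ t in (0:ℝ)..x, c t) ≤ (Real.log W + lam) * c x := by
  intro x hx hxW
  have hx0 : (0:ℝ) < x := lt_of_lt_of_le one_pos hx
  -- c equals lam a.e. on [0,1]
  have hae : ∀ᵐ t ∂(MeasureTheory.volume : MeasureTheory.Measure ℝ),
      t ∈ Set.uIoc (0:ℝ) 1 → c t = lam := by
    have h1 : ∀ᵐ t ∂(MeasureTheory.volume : MeasureTheory.Measure ℝ), t ≠ 1 := by
      rw [MeasureTheory.ae_iff]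
      simpa using MeasureTheory.measure_singleton (μ := MeasureTheory.volume) (1:ℝ)
    filter_upwards [h1] with t ht hmem
    rw [Set.uIoc_of_le (by norm_num : (0:ℝ) ≤ 1)] at hmem
    exact hc1 t hmem.1.le (lt_of_le_of_ne hmem.2 ht)
  have hI1 : ∫ t in (0:ℝ)..1, c t = lam := by
    rw [intervalIntegral.integral_congr_ae hae]
    simp
  have heq2 : Set.EqOn c (fun t => 1 / t) (Set.uIcc 1 x) := by
    intro t ht
    rw [Set.uIcc_of_le hx] at ht
    exact hc2 t ht.1
  have hI2 : ∫ t in (1:ℝ)..x, c t = Real.log x := by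
    rw [intervalIntegral.integral_congr heq2, integral_one_div, div_one]
    intro h
    rw [Set.uIcc_of_le hx] at h
    exact absurd h.1 (by norm_num)
  have hint1 : IntervalIntegrable c MeasureTheory.volume 0 1 := by
    apply IntervalIntegrable.congr_ae (f := fun _ : ℝ => lam)
    · exact intervalIntegrable_const
    · show ∀ᵐ t ∂(MeasureTheory.volume.restrict (Set.uIoc (0:ℝ) 1)), lam = c t
      rw [MeasureTheory.ae_restrict_iff' measurableSet_uIoc]
      filter_upwards [hae] with t ht hm
      exact (ht hm).symm
  have hint2 : IntervalIntegrable c MeasureTheory.volume 1 x := by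
    have hcont : ContinuousOn (fun t : ℝ => 1 / t) (Set.uIcc 1 x) := by
      apply ContinuousOn.div continuousOn_const continuousOn_id
      intro t ht
      rw [Set.uIcc_of_le hx] at ht
      exact ne_of_gt (lt_of_lt_of_le one_pos ht.1)
    apply hcont.intervalIntegrable.congr_ae
    show ∀ᵐ t ∂(MeasureTheory.volume.restrict (Set.uIoc (1:ℝ) x)), 1 / t = c t
    rw [MeasureTheory.ae_restrict_iff' measurableSet_uIoc]
    filter_upwards with t ht
    exact (heq2 (Set.uIoc_subset_uIcc ht)).symm
  have hI : ∫ t in (0:ℝ)..x, c t = lam + Real.log x := by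
    rw [← intervalIntegral.integral_add_adjacent_intervals hint1 hint2, hI1, hI2]
  have hcx : c x = 1 / x := hc2 x hx
  have hlog0 : 0 ≤ Real.log x := Real.log_nonneg hx
  have hlogW : Real.log x ≤ Real.log W := Real.log_le_log hx0 hxW
  rw [hI, hcx]
  rw [mul_one_div, mul_one_div, one_div_mul_eq_div]
  constructor
  · gcongr ?_ / x
    linarith
  · gcongr ?_ / x
    linarith
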